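/- For every integer d ≥ 1 and every finite set P of n points in ℝ^d, there exists a point p ∈ P such that every axis-parallel box B in ℝ^d with |B ∩ P| > ((2d−1)/(2d))·n contains p. (Equivalently, some point of P is a strong ((2d−1)/(2d))-centerpoint of P with respect to axis-parallel boxes.) -/

import Mathlib

/-- An axis-parallel box in ℝ^d: a product of closed intervals. -/
def IsBox {d : ℕ} (B : Set (EuclideanSpace ℝ (Fin d))) : Prop :=
  ∃ a b : Fin d → ℝ, B = {x | ∀ i, a i ≤ x i ∧ x i ≤ b i}

/-- Strong centerpoint for axis-parallel boxes in ℝ^d: some point of `P` lies in every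
axis-parallel box containing more than a `(2d-1)/(2d)` fraction of the points of `P`. -/
theorem strong_centerpoint_boxes (d : ℕ) (hd : 1 ≤ d)
    (P : Finset (EuclideanSpace ℝ (Fin d))) (hP : P.Nonempty) :
    ∃ p ∈ P, ∀ B : Set (EuclideanSpace ℝ (Fin d)), IsBox B →
      ((2 * (d : ℝ) - 1) / (2 * d)) * P.card < ((B ∩ ↑P).ncard : ℝ) → p ∈ B := by
  classical
  set n := P.card with hn
  have hn0 : 0 < n := Finset.card_pos.2 hP
  set Alo : Fin d → Finset (EuclideanSpace ℝ (Fin d)) :=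
    fun i => P.filter (fun q => 2*d*(P.filter (fun r => r i ≤ q i)).card < n) with hAloDef
  set Ahi : Fin d → Finset (EuclideanSpace ℝ (Fin d)) :=
    fun i => P.filter (fun q => 2*d*(P.filter (fun r => q i ≤ r i)).card < n) with hAhiDef
  have hAlo : ∀ i, 2*d*(Alo i).card < n := by
    intro i
    by_cases h : (Alo i).Nonempty
    · obtain ⟨q, hq, hmax⟩ := Finset.exists_max_image (Alo i) (fun r => r i) h
      have hsub : Alo i ⊆ P.filter (fun r => r i ≤ q i) := by
        intro r hr
        have hr' := hr
        simp only [hAloDef, Finset.mem_filter] at hr'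
        exact Finset.mem_filter.2 ⟨hr'.1, hmax r hr⟩
      have hq' : 2*d*(P.filter (fun r => r i ≤ q i)).card < n :=
        (Finset.mem_filter.1 hq).2
      calc 2*d*(Alo i).card ≤ 2*d*(P.filter (fun r => r i ≤ q i)).card :=
            Nat.mul_le_mul_left _ (Finset.card_le_card hsub)
        _ < n := hq'
    · rw [Finset.not_nonempty_iff_eq_empty] at h
      simp [h, hn0]
  have hAhi : ∀ i, 2*d*(Ahi i).card < n := by
    intro i
    by_cases h : (Ahi i).Nonempty
    · obtain ⟨q, hq, hmin⟩ := Finset.exists_min_image (Ahi i) (fun r => r i) h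
      have hsub : Ahi i ⊆ P.filter (fun r => q i ≤ r i) := by
        intro r hr
        have hr' := hr
        simp only [hAhiDef, Finset.mem_filter] at hr'
        exact Finset.mem_filter.2 ⟨hr'.1, hmin r hr⟩
      have hq' : 2*d*(P.filter (fun r => q i ≤ r i)).card < n :=
        (Finset.mem_filter.1 hq).2
      calc 2*d*(Ahi i).card ≤ 2*d*(P.filter (fun r => q i ≤ r i)).card :=
            Nat.mul_le_mul_left _ (Finset.card_le_card hsub)
        _ < n := hq'
    · rw [Finset.not_nonempty_iff_eq_empty] at h
      simp [h, hn0]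
  -- the set of bad points has fewer than n elements
  set Bad : Finset (EuclideanSpace ℝ (Fin d)) :=
    Finset.univ.biUnion (fun i : Fin d => Alo i ∪ Ahi i) with hBadDef
  have hBadcard : Bad.card < n := by
    have h1 : Bad.card ≤ ∑ i : Fin d, (Alo i ∪ Ahi i).card :=
      Finset.card_biUnion_le
    have h2 : ∀ i : Fin d, 2*d*(Alo i ∪ Ahi i).card + 2 ≤ 2*n := by
      intro i
      have hu := Finset.card_union_le (Alo i) (Ahi i)
      have h3 : 2*d*(Alo i ∪ Ahi i).card ≤ 2*d*(Alo i).card + 2*d*(Ahi i).card := by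
        calc 2*d*(Alo i ∪ Ahi i).card ≤ 2*d*((Alo i).card + (Ahi i).card) :=
              Nat.mul_le_mul_left _ hu
          _ = 2*d*(Alo i).card + 2*d*(Ahi i).card := by ring
      have hlo := hAlo i
      have hhi := hAhi i
      linarith
    have h4 : 2*d*Bad.card + d*2 ≤ d*(2*n) := by
      calc 2*d*Bad.card + d*2 ≤ (∑ i : Fin d, 2*d*(Alo i ∪ Ahi i).card) + d*2 := by
            have : 2*d*Bad.card ≤ 2*d*(∑ i : Fin d, (Alo i ∪ Ahi i).card) :=
              Nat.mul_le_mul_left _ h1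
            rw [Finset.mul_sum] at this
            linarith
        _ = ∑ i : Fin d, (2*d*(Alo i ∪ Ahi i).card + 2) := by
            rw [Finset.sum_add_distrib]
            simp [Finset.sum_const, mul_comm]
        _ ≤ ∑ _i : Fin d, (2*n) := Finset.sum_le_sum (fun i _ => h2 i)
        _ = d*(2*n) := by simp [Finset.sum_const, mul_comm]
    have hd0 : 0 < d := hd
    by_contra hc
    push_neg at hc
    have h7 : 2*d*n ≤ 2*d*Bad.card := Nat.mul_le_mul_left _ hc
    have h6 : 2*d*n = d*(2*n) := by ring
    linarith
  -- there is a good point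
  have hexists : ∃ p ∈ P, p ∉ Bad := by
    by_contra hcon
    push_neg at hcon
    have : P ⊆ Bad := fun p hp => hcon p hp
    have := Finset.card_le_card this
    omega
  obtain ⟨p, hpP, hpBad⟩ := hexists
  refine ⟨p, hpP, ?_⟩
  have hgood : ∀ i : Fin d, n ≤ 2*d*(P.filter (fun r => r i ≤ p i)).card ∧
      n ≤ 2*d*(P.filter (fun r => p i ≤ r i)).card := by
    intro i
    constructor
    · by_contra h
      push_neg at h
      exact hpBad (Finset.mem_biUnion.2 ⟨i, Finset.mem_univ _,
        Finset.mem_union_left _ (Finset.mem_filter.2 ⟨hpP, h⟩)⟩)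
    · by_contra h
      push_neg at h
      exact hpBad (Finset.mem_biUnion.2 ⟨i, Finset.mem_univ _,
        Finset.mem_union_right _ (Finset.mem_filter.2 ⟨hpP, h⟩)⟩)
  intro B hB hcard
  obtain ⟨a, b, rfl⟩ := hB
  by_contra hpB
  simp only [Set.mem_setOf_eq, not_forall] at hpB
  obtain ⟨i, hi⟩ := hpB
  have h2d : (0:ℝ) < 2*(d:ℝ) := by positivity
  -- common contradiction derivation
  have key : ∀ S : Finset (EuclideanSpace ℝ (Fin d)), S ⊆ P → n ≤ 2*d*S.card →
      ({x : EuclideanSpace ℝ (Fin d) | ∀ j, a j ≤ x j ∧ x j ≤ b j} ∩ ↑P ⊆ ↑(P \ S)) → False := by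
    intro S hSP hScard hsub
    have hfin : (↑(P \ S) : Set (EuclideanSpace ℝ (Fin d))).Finite := (P \ S).finite_toSet
    have h1 : ({x : EuclideanSpace ℝ (Fin d) | ∀ j, a j ≤ x j ∧ x j ≤ b j} ∩ ↑P).ncard ≤ (P \ S).card := by
      have := Set.ncard_le_ncard hsub hfin
      rwa [Set.ncard_coe_finset] at this
    have h2 : ((P \ S).card : ℝ) = (n:ℝ) - S.card := by
      rw [Finset.card_sdiff_of_subset hSP]
      have := Finset.card_le_card hSP
      push_cast [Nat.cast_sub this]
      ring_nf
      rw [hn]; ring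
    have hScard' : (n:ℝ) ≤ 2*(d:ℝ)*S.card := by exact_mod_cast hScard
    have h1' : (({x : EuclideanSpace ℝ (Fin d) | ∀ j, a j ≤ x j ∧ x j ≤ b j} ∩ ↑P).ncard : ℝ) ≤ (n:ℝ) - S.card := by
      rw [← h2]; exact_mod_cast h1
    have hcard' : (2*(d:ℝ)-1)*n < 2*(d:ℝ)*(({x : EuclideanSpace ℝ (Fin d) | ∀ j, a j ≤ x j ∧ x j ≤ b j} ∩ ↑P).ncard : ℝ) := by
      have := hcard
      rw [div_mul_eq_mul_div, div_lt_iff₀ h2d] at this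
      calc (2*(d:ℝ)-1)*n = (2*(d:ℝ)-1)*(P.card:ℝ) := by rw [hn]
        _ < _ := by nlinarith [this]
    nlinarith [h1', hScard', hcard']
  rcases not_and_or.1 hi with h | h
  · push_neg at h
    refine key (P.filter (fun r => r i ≤ p i)) (Finset.filter_subset _ _) (hgood i).1 ?_
    intro x hx
    obtain ⟨hxB, hxP⟩ := hx
    simp only [Finset.coe_sdiff, Set.mem_diff, Finset.mem_coe, Finset.coe_filter,
      Set.mem_setOf_eq] at *
    refine ⟨hxP, ?_⟩
    intro hmem
    have := (hxB i).1
    have hxi := hmem.2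
    linarith
  · push_neg at h
    refine key (P.filter (fun r => p i ≤ r i)) (Finset.filter_subset _ _) (hgood i).2 ?_
    intro x hx
    obtain ⟨hxB, hxP⟩ := hx
    simp only [Finset.coe_sdiff, Set.mem_diff, Finset.mem_coe, Finset.coe_filter,
      Set.mem_setOf_eq] at *
    refine ⟨hxP, ?_⟩
    intro hmem
    have := (hxB i).2
    have hxi := hmem.2
    linarith
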